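/- A simplicial set X has the right lifting property (with respect to the unique map X → Δ[0]) against every map in the class ({0} ↪ J) □ Bdry if and only if it has the right lifting property against every widened inclusion. -/

import Mathlib

open CategoryTheory Simplicial Opposite Limits

namespace Paper

/-! ## The simplicial set `J`, nerve of the free-living isomorphism -/

/-- The simplicial set `J`, the nerve of the free-living isomorphism `𝕀`:
its `n`-simplices are the tuples `{0,1}^(n+1)` (recorded as `Bool`-valued functions,
`false` being the vertex `0` and `true` the vertex `1`), with all simplicial
operators acting by reindexing. -/
def J : SSet.{0} where
  obj m := Fin (m.unop.len + 1) → Bool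
  map f := TypeCat.ofHom fun a => a ∘ f.unop.toOrderHom
  map_id _ := rfl
  map_comp _ _ := rfl

/-- The two vertices `0, 1 : Δ[0] ⟶ J` of `J`; `ptJ false` is the vertex `0` and
`ptJ true` is the vertex `1`. -/
def ptJ (b : Bool) : Δ[0] ⟶ J where
  app _ := TypeCat.ofHom fun _ => fun _ => b
  naturality _ _ _ := rfl

/-- The boundary `∂J = {0} ∪ {1}` of `J` (two discrete points). -/
def bJ : SSet.{0} where
  obj _ := Bool
  map _ := TypeCat.ofHom fun b => b
  map_id _ := rfl
  map_comp _ _ := rfl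

/-- The inclusion `∂J ↪ J`. -/
def bJIncl : bJ ⟶ J where
  app _ := TypeCat.ofHom fun b => fun _ => b
  naturality _ _ _ := rfl

/-! ## Binary products and pushout-products -/

/-- The (pointwise) product of two simplicial sets. -/
def sprod (X Y : SSet.{0}) : SSet.{0} where
  obj m := X.obj m × Y.obj m
  map f := TypeCat.ofHom fun p => (X.map f p.1, Y.map f p.2)
  map_id m := by
    ext p
    exacts [FunctorToTypes.map_id_apply X p.1, FunctorToTypes.map_id_apply Y p.2]
  map_comp f g := by
    ext p
    exacts [FunctorToTypes.map_comp_apply X f g p.1, FunctorToTypes.map_comp_apply Y f g p.2]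

/-- The product of two morphisms of simplicial sets. -/
def sprodMap {X X' Y Y' : SSet.{0}} (f : X ⟶ X') (g : Y ⟶ Y') : sprod X Y ⟶ sprod X' Y' where
  app m := TypeCat.ofHom fun p => (f.app m p.1, g.app m p.2)
  naturality m m' φ := by
    ext p
    refine Prod.ext ?_ ?_
    exacts [NatTrans.naturality_apply f φ p.1, NatTrans.naturality_apply g φ p.2]

/-- The pushout-product `f □ g : (A × Z) ∪ (B × W) ⟶ B × Z` of `f : A ⟶ B` and
`g : W ⟶ Z`, the domain being presented as the pushout `(A × Z) ∪_{A × W} (B × W)`. -/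
noncomputable def pp {A B W Z : SSet.{0}} (f : A ⟶ B) (g : W ⟶ Z) :
    pushout (sprodMap (𝟙 A) g) (sprodMap f (𝟙 W)) ⟶ sprod B Z :=
  pushout.desc (sprodMap f (𝟙 Z)) (sprodMap (𝟙 B) g) rfl

/-! ## Saturated classes of morphisms -/

/-- A class of morphisms is stable under retracts if, whenever `f` is a retract of `g`
in the arrow category, membership of `g` implies membership of `f`. -/
def StableUnderRetracts (T : MorphismProperty SSet.{0}) : Prop :=
  ∀ ⦃X Y X' Y' : SSet.{0}⦄ (f : X ⟶ Y) (g : X' ⟶ Y')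
    (i : Arrow.mk f ⟶ Arrow.mk g) (r : Arrow.mk g ⟶ Arrow.mk f),
    i ≫ r = 𝟙 _ → T g → T f

/-- The inclusion functor `Set.Iio i ⥤ ι`. -/
def iioFunctor {ι : Type} [Preorder ι] (i : ι) : Set.Iio i ⥤ ι :=
  Monotone.functor (f := Subtype.val) (fun _ _ h => h)

/-- The cocone on the restriction of `F : ι ⥤ SSet` to `Set.Iio i` with apex `F.obj i`. -/
def restrictionCocone {ι : Type} [Preorder ι] (F : ι ⥤ SSet.{0}) (i : ι) :
    Cocone (iioFunctor i ⋙ F) where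
  pt := F.obj i
  ι :=
    { app := fun j => F.map (homOfLE j.2.le)
      naturality := fun j k h => by
        dsimp [iioFunctor]
        rw [← F.map_comp, Category.comp_id]
        congr 1 }

/-- A class of morphisms is stable under transfinite composition if, for every
well-ordered type `ι` and every functor `F : ι ⥤ SSet` which is continuous at limit
stages and whose successor maps `F.obj i ⟶ F.obj (i+1)` all belong to the class, and
every colimit cocone `c` on `F`, the transfinite composite `F.obj ⊥ ⟶ c.pt` belongs to
the class. -/
def StableUnderTransfiniteComposition (T : MorphismProperty SSet.{0}) : Prop :=
  ∀ (ι : Type) [LinearOrder ι] [SuccOrder ι] [OrderBot ι] [WellFoundedLT ι]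
    (F : ι ⥤ SSet.{0}),
    (∀ i : ι, ¬IsMax i → T (F.map (homOfLE (Order.le_succ i)))) →
    (∀ i : ι, Order.IsSuccLimit i → Nonempty (IsColimit (restrictionCocone F i))) →
    ∀ (c : Cocone F), IsColimit c → T (c.ι.app ⊥)

/-- A class of morphisms of simplicial sets is saturated if it is closed under
isomorphisms, pushouts, transfinite compositions, and retracts. -/
structure IsSaturated (T : MorphismProperty SSet.{0}) : Prop where
  respectsIso : T.RespectsIso
  stableUnderCobaseChange : T.IsStableUnderCobaseChange
  stableUnderRetracts : StableUnderRetracts T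
  stableUnderTransfiniteComposition : StableUnderTransfiniteComposition T

/-- The saturated closure of a class of morphisms: the smallest saturated class
containing it. -/
def satClosure (S : MorphismProperty SSet.{0}) : MorphismProperty SSet.{0} :=
  fun _ _ f => ∀ T : MorphismProperty SSet.{0}, IsSaturated T → S ≤ T → T f

/-! ## Subcomplexes -/

/-- A subcomplex of a simplicial set. -/
structure Sub (X : SSet.{0}) where
  carrier : ∀ m, Set (X.obj m)
  map_mem : ∀ ⦃m m' : SimplexCategoryᵒᵖ⦄ (f : m ⟶ m') ⦃σ : X.obj m⦄,
    σ ∈ carrier m → X.map f σ ∈ carrier m'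

/-- The simplicial set underlying a subcomplex. -/
def Sub.toSSet {X : SSet.{0}} (S : Sub X) : SSet.{0} where
  obj m := S.carrier m
  map f := TypeCat.ofHom fun σ => ⟨X.map f σ.1, S.map_mem f σ.2⟩
  map_id m := by
    ext σ
    exact FunctorToTypes.map_id_apply X σ.1
  map_comp f g := by
    ext σ
    exact FunctorToTypes.map_comp_apply X f g σ.1

/-- The inclusion of a subcomplex. -/
def Sub.ι {X : SSet.{0}} (S : Sub X) : S.toSSet ⟶ X where
  app m := TypeCat.ofHom fun (σ : S.carrier m) => σ.1
  naturality _ _ _ := rfl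

/-- Containment of subcomplexes. -/
def Sub.Le {X : SSet.{0}} (S T : Sub X) : Prop := ∀ m, S.carrier m ⊆ T.carrier m

/-- The inclusion map associated to a containment of subcomplexes. -/
def Sub.homOfLe {X : SSet.{0}} {S T : Sub X} (h : S.Le T) : S.toSSet ⟶ T.toSSet where
  app m := TypeCat.ofHom fun (σ : S.carrier m) => (⟨σ.1, h m σ.2⟩ : T.carrier m)
  naturality _ _ _ := rfl

/-- The union of two subcomplexes. -/
def Sub.union {X : SSet.{0}} (S T : Sub X) : Sub X where
  carrier m := S.carrier m ∪ T.carrier m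
  map_mem _ _ f _ h := h.imp (fun hs => S.map_mem f hs) (fun ht => T.map_mem f ht)

/-- The intersection of two subcomplexes. -/
def Sub.inter {X : SSet.{0}} (S T : Sub X) : Sub X where
  carrier m := S.carrier m ∩ T.carrier m
  map_mem _ _ f _ h := ⟨S.map_mem f h.1, T.map_mem f h.2⟩

/-- A subcomplex `S` of `X`, viewed as a subcomplex of (the simplicial set underlying)
another subcomplex `T` of `X`. -/
def Sub.restrict {X : SSet.{0}} (T S : Sub X) : Sub T.toSSet where
  carrier m := {σ | Subtype.val σ ∈ S.carrier m}
  map_mem _ _ f _ h := S.map_mem f h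

/-- The (dimension zero) object of `SimplexCategoryᵒᵖ` indexing vertices. -/
abbrev V0 : SimplexCategoryᵒᵖ := Opposite.op (SimplexCategory.mk 0)

/-- The full subcomplex of `X` on a set `ν` of vertices: the simplices all of whose
vertices lie in `ν`. -/
def fullSub (X : SSet.{0}) (ν : Set (X.obj V0)) : Sub X where
  carrier m := {σ | ∀ g : SimplexCategory.mk 0 ⟶ m.unop, X.map g.op σ ∈ ν}
  map_mem := by
    intro m m' f σ hσ g
    rw [← FunctorToTypes.map_comp_apply]
    exact hσ (g ≫ f.unop)

/-! ## Widenings and widened inclusions -/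

/-- The widening `W_ν(X)` of `X` at a set `ν` of vertices: the full subcomplex of
`J × X` on the vertex set `({0} × X₀) ∪ ({1} × ν)`. -/
def wideSub (X : SSet.{0}) (ν : Set (X.obj V0)) : Sub (sprod J X) :=
  fullSub (sprod J X) {p | Prod.fst p 0 = true → Prod.snd p ∈ ν}

/-- The subcomplex `{0} × X` of `J × X` (the full subcomplex on the vertices
`{0} × X₀`). -/
def zeroSlice (X : SSet.{0}) : Sub (sprod J X) :=
  fullSub (sprod J X) {p | Prod.fst p 0 = false}

/-- For `A` a subcomplex of `Y`, the subcomplex `J × A` of `J × Y`. -/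
def Sub.prodJ {Y : SSet.{0}} (A : Sub Y) : Sub (sprod J Y) where
  carrier m := {p | Prod.snd p ∈ A.carrier m}
  map_mem _ _ f _ h := A.map_mem f h

/-- Given a subcomplex (inclusion) `A = X ⊆ Y` and a set `ν` of vertices of `Y`, the
subcomplex `({0} × Y) ∪ W_{ν ∩ X₀}(X)` of `J × Y`: the domain of the inclusion
`X ↪ Y` widened at `ν`. -/
def widenedSub (Y : SSet.{0}) (A : Sub Y) (ν : Set (Y.obj V0)) : Sub (sprod J Y) :=
  (zeroSlice Y).union ((wideSub Y (ν ∩ A.carrier V0)).inter A.prodJ)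

lemma zeroSlice_le_wideSub (Y : SSet.{0}) (ν : Set (Y.obj V0)) :
    (zeroSlice Y).Le (wideSub Y ν) := by
  intro m σ hσ g h
  exact absurd (hσ g) (by simp [h])

lemma wideSub_mono (Y : SSet.{0}) {ν ν' : Set (Y.obj V0)} (h : ν ⊆ ν') :
    (wideSub Y ν).Le (wideSub Y ν') :=
  fun _ σ hσ g ht => h (hσ g ht)

lemma widenedSub_le (Y : SSet.{0}) (A : Sub Y) (ν : Set (Y.obj V0)) :
    (widenedSub Y A ν).Le (wideSub Y ν) := by
  refine fun m σ hσ => Or.elim hσ (fun h => ?_) (fun h => ?_)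
  · exact zeroSlice_le_wideSub Y ν m h
  · exact wideSub_mono Y Set.inter_subset_left m h.1

/-- The inclusion `X ↪ Y` widened at `ν`: the inclusion
`({0} × Y) ∪ W_{ν ∩ X₀}(X) ↪ W_ν(Y)`. -/
def widenedIncl (Y : SSet.{0}) (A : Sub Y) (ν : Set (Y.obj V0)) :
    (widenedSub Y A ν).toSSet ⟶ (wideSub Y ν).toSSet :=
  Sub.homOfLe (widenedSub_le Y A ν)

/-- `Wide`: the class of all widened inclusions. -/
def Wide : MorphismProperty SSet.{0} := fun _ _ h =>
  ∃ (Y : SSet.{0}) (A : Sub Y) (ν : Set (Y.obj V0)),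
    Arrow.mk h = Arrow.mk (widenedIncl Y A ν)

/-- `Wide^(1)`: the class of inclusions widened at a single vertex. -/
def Wide1 : MorphismProperty SSet.{0} := fun _ _ h =>
  ∃ (Y : SSet.{0}) (A : Sub Y) (v : Y.obj V0),
    Arrow.mk h = Arrow.mk (widenedIncl Y A {v})

/-! ## Narrow vertices -/

/-- A vertex `v` of `Y` is narrow if every simplex of `Y` has at most one vertex equal
to `v`. -/
def Narrow (Y : SSet.{0}) (v : Y.obj V0) : Prop :=
  ∀ ⦃m : SimplexCategoryᵒᵖ⦄ (σ : Y.obj m) (g g' : SimplexCategory.mk 0 ⟶ m.unop),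
    Y.map g.op σ = v → Y.map g'.op σ = v → g = g'

/-- `Wide_nar`: the class of inclusions widened at a narrow set of vertices. -/
def WideNar : MorphismProperty SSet.{0} := fun _ _ h =>
  ∃ (Y : SSet.{0}) (A : Sub Y) (ν : Set (Y.obj V0)),
    (∀ v ∈ ν, Narrow Y v) ∧ Arrow.mk h = Arrow.mk (widenedIncl Y A ν)

/-- `Wide_nar^(1)`: the class of inclusions widened at a single narrow vertex. -/
def WideNar1 : MorphismProperty SSet.{0} := fun _ _ h =>
  ∃ (Y : SSet.{0}) (A : Sub Y) (v : Y.obj V0),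
    Narrow Y v ∧ Arrow.mk h = Arrow.mk (widenedIncl Y A {v})

/-! ## Standard simplices, boundaries, skeleta, iso-horns -/

/-- The unique map to the terminal simplicial set `Δ[0]`. -/
def toPt (X : SSet.{0}) : X ⟶ Δ[0] where
  app m := TypeCat.ofHom fun _ => SSet.stdSimplex.const 0 0 m
  naturality m m' f := by
    ext x
    apply SSet.stdSimplex.objEquiv.injective
    apply SimplexCategory.Hom.ext
    apply OrderHom.ext
    funext j
    exact Subsingleton.elim (α := Fin 1) _ _

/-- The `i`-th vertex of the standard simplex `Δ[n]`. -/
def vrt (n : ℕ) (i : Fin (n + 1)) : Δ[n].obj V0 :=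
  SSet.stdSimplex.const n i V0

/-- The boundary `∂Δ[n]`, as a subcomplex of `Δ[n]`: the simplices which are not
surjective as monotone maps. -/
def bSub (n : ℕ) : Sub Δ[n] where
  carrier m := {σ | ¬Function.Surjective (SSet.stdSimplex.asOrderHom σ)}
  map_mem _ _ f σ hσ h := hσ (Function.Surjective.of_comp h)

/-- The `k`-skeleton of `Y`, as a subcomplex: the simplices which factor through some
simplex of dimension at most `k`. -/
def skSub (Y : SSet.{0}) (k : ℕ) : Sub Y where
  carrier m := {σ | ∃ (j : ℕ) (_ : j ≤ k) (f : m.unop ⟶ SimplexCategory.mk j)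
    (τ : Y.obj (Opposite.op (SimplexCategory.mk j))), Y.map f.op τ = σ}
  map_mem := by
    rintro m m' φ σ ⟨j, hj, f, τ, rfl⟩
    exact ⟨j, hj, φ.unop ≫ f, τ, by rw [← FunctorToTypes.map_comp_apply]; rfl⟩

/-- A `k`-simplex is nondegenerate if it admits no factorization through a simplex of
strictly smaller dimension. -/
def Nondegenerate (Y : SSet.{0}) {k : ℕ} (σ : Y.obj (Opposite.op (SimplexCategory.mk k))) :
    Prop :=
  ∀ (j : ℕ) (f : SimplexCategory.mk k ⟶ SimplexCategory.mk j)
    (τ : Y.obj (Opposite.op (SimplexCategory.mk j))), Y.map f.op τ = σ → k ≤ j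

/-- The iso-horn inclusion `𝕍_i[m+1] ↪ ∇̄_i[m+1]`: the boundary inclusion
`∂Δ[m] ↪ Δ[m]` widened at the single vertex `i`, i.e. the inclusion
`({0} × Δ[m]) ∪ W_i(∂Δ[m]) ↪ W_i(Δ[m])` of the iso-horn into the isoplex. -/
def isoHornIncl (m : ℕ) (i : Fin (m + 1)) :
    (widenedSub Δ[m] (bSub m) {vrt m i}).toSSet ⟶ (wideSub Δ[m] {vrt m i}).toSSet :=
  widenedIncl Δ[m] (bSub m) {vrt m i}

/-- `IsoHorn`: the class of all iso-horn inclusions. -/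
def IsoHorn : MorphismProperty SSet.{0} := fun _ _ h =>
  ∃ (m : ℕ) (i : Fin (m + 1)), Arrow.mk h = Arrow.mk (isoHornIncl m i)

/-! ## The classes `({0} ↪ J) □ Bdry` and `({0} ↪ J) □ Mono` -/

/-- The boundary `∂Δ[n]` as in the older Mathlib (`SSet.boundary`, since replaced by a
subcomplex): the simplices of `Δ[n]` which are not surjective. -/
def boundary (n : ℕ) : SSet.{0} where
  obj m := { α : Δ[n].obj m // ¬Function.Surjective (SSet.stdSimplex.asOrderHom α) }
  map f := TypeCat.ofHom fun α => ⟨Δ[n].map f α.1, by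
      intro h
      apply α.property
      exact Function.Surjective.of_comp h⟩

/-- The boundary inclusion `∂Δ[n] ⟶ Δ[n]` as in the older Mathlib (`SSet.boundaryInclusion`). -/
def boundaryInclusion (n : ℕ) : boundary n ⟶ Δ[n] where
  app m := TypeCat.ofHom fun (α : { α : Δ[n].obj m // _ }) => α.1

/-- The class `({0} ↪ J) □ Bdry` of pushout-products of the vertex `0 : Δ[0] ⟶ J`
with the boundary inclusions `∂Δ[n] ↪ Δ[n]`. -/
def ppJ0Bdry : MorphismProperty SSet.{0} := fun _ _ h =>
  ∃ n : ℕ, Arrow.mk h = Arrow.mk (pp (ptJ false) (boundaryInclusion n))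

/-- The class `({0} ↪ J) □ Mono` of pushout-products of the vertex `0 : Δ[0] ⟶ J`
with all monomorphisms of simplicial sets. -/
def ppJ0Mono : MorphismProperty SSet.{0} := fun _ _ h =>
  ∃ (W Z : SSet.{0}) (g : W ⟶ Z), Mono g ∧ Arrow.mk h = Arrow.mk (pp (ptJ false) g)


section AuxBasic

/-- Any two elements of `Δ[0].obj m` are equal. -/
lemma pt_eq {m : SimplexCategoryᵒᵖ} (x y : Δ[0].obj m) : x = y := by
  apply (SSet.stdSimplex.objEquiv).injective
  apply SimplexCategory.Hom.ext
  apply OrderHom.ext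
  funext i
  exact Subsingleton.elim (α := Fin 1) _ _

/-- Any two maps into `Δ[0]` are equal. -/
lemma toPt_eq {B : SSet.{0}} (g h : B ⟶ Δ[0]) : g = h := by
  ext m b

/-- Extension property. -/
def Ext (X : SSet.{0}) {A B : SSet.{0}} (f : A ⟶ B) : Prop :=
  ∀ u : A ⟶ X, ∃ v : B ⟶ X, f ≫ v = u

end AuxBasic

section FinLemmas

/-- A monotone surjection `Fin (k+1) → Fin (d+1)` admits a monotone section passing
through any prescribed point `j` of the fiber over `f j`. -/
lemma exists_section (k d : ℕ) (f : Fin (k+1) →o Fin (d+1))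
    (hf : Function.Surjective f) (j : Fin (k+1)) :
    ∃ g : Fin (d+1) →o Fin (k+1), (∀ i, f (g i) = i) ∧ g (f j) = j := by
  classical
  have hne : ∀ i : Fin (d+1), (Finset.univ.filter fun a => f a = i).Nonempty := by
    intro i
    obtain ⟨a, ha⟩ := hf i
    exact ⟨a, by simp [ha]⟩
  set μ : Fin (d+1) → Fin (k+1) := fun i => (Finset.univ.filter fun a => f a = i).min' (hne i)
    with hμdef
  have hμf : ∀ i, f (μ i) = i := by
    intro i
    have := Finset.min'_mem _ (hne i)
    simpa using this
  have hμle : ∀ i a, f a = i → μ i ≤ a := by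
    intro i a ha
    exact Finset.min'_le _ _ (by simp [ha])
  have hμmono : ∀ i i' : Fin (d+1), i ≤ i' → μ i ≤ μ i' := by
    intro i i' hii
    by_contra h
    push_neg at h
    have h2 : f (μ i') ≤ f (μ i) := f.monotone h.le
    rw [hμf, hμf] at h2
    have : i = i' := le_antisymm hii h2
    subst this
    exact absurd rfl h.ne
  set g : Fin (d+1) → Fin (k+1) := fun i => if i = f j then j else μ i with hgdef
  have hgmono : Monotone g := by
    intro i i' hii
    rcases eq_or_lt_of_le hii with rfl | hlt
    · exact le_refl _
    simp only [hgdef]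
    by_cases h1 : i = f j <;> by_cases h2 : i' = f j
    · exact absurd (h1.trans h2.symm) hlt.ne
    · -- g i = j, g i' = μ i'
      rw [if_pos h1, if_neg h2]
      by_contra hc
      push_neg at hc
      have : f (μ i') ≤ f j := f.monotone hc.le
      rw [hμf, ← h1] at this
      exact absurd (lt_of_lt_of_le hlt this) (lt_irrefl _)
    · -- g i = μ i, g i' = j
      rw [if_neg h1, if_pos h2]
      by_contra hc
      push_neg at hc
      have : f j ≤ f (μ i) := f.monotone hc.le
      rw [hμf, ← h2] at this
      exact absurd (lt_of_lt_of_le hlt this) (lt_irrefl _)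
    · rw [if_neg h1, if_neg h2]
      exact hμmono _ _ hii
  refine ⟨⟨g, hgmono⟩, ?_, ?_⟩
  · intro i
    show f (if i = f j then j else μ i) = i
    by_cases h : i = f j
    · rw [if_pos h, h]
    · rw [if_neg h, hμf]
  · show (if f j = f j then j else μ (f j)) = j
    rw [if_pos rfl]

/-- A monotone surjective endomap of `Fin (n+1)` is the identity. -/
lemma le_apply_fin {N : ℕ} (f : Fin N → Fin N) (hf : StrictMono f) (i : Fin N) : i ≤ f i := by
  have H : ∀ m : ℕ, ∀ i : Fin N, i.1 = m → i ≤ f i := by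
    intro m
    induction m using Nat.strong_induction_on with
    | _ m ih =>
      intro i him
      by_contra h
      push_neg at h
      have h1 : f i ≤ f (f i) := ih (f i).1 (by rw [← him]; exact h) (f i) rfl
      exact absurd (lt_of_le_of_lt h1 (hf h)) (lt_irrefl _)
  exact H i.1 i rfl

lemma monotone_surj_id (n : ℕ) (e : Fin (n+1) →o Fin (n+1))
    (he : Function.Surjective e) : ∀ i, e i = i := by
  have hinj : Function.Injective e := Finite.injective_iff_surjective.mpr he
  have hsm : StrictMono (⇑e) := e.monotone.strictMono_of_injective hinj
  obtain ⟨g, hg, -⟩ := exists_section n n e he 0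
  have hginj : Function.Injective g := by
    intro a b hab
    have := congrArg e hab
    rwa [hg, hg] at this
  have hgsm : StrictMono (⇑g) := g.monotone.strictMono_of_injective hginj
  intro i
  have h1 : i ≤ e i := le_apply_fin _ hsm i
  have h2 : e i ≤ i := by
    have : i ≤ g i := le_apply_fin _ hgsm i
    have := e.monotone this
    rwa [hg] at this
  exact le_antisymm h2 h1

end FinLemmas

section AuxSimplexCat

/-- Every morphism `⦋0⦌ ⟶ m` in `SimplexCategory` is constant. -/
lemma hom_from_zero_eq_const {m : SimplexCategory} (g : (⦋0⦌ : SimplexCategory) ⟶ m) :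
    g = SimplexCategory.const ⦋0⦌ m (g.toOrderHom 0) := by
  apply SimplexCategory.Hom.ext
  apply OrderHom.ext
  funext i
  have hi : i = 0 := Fin.ext (Nat.lt_one_iff.mp i.isLt)
  subst hi
  rfl

/-- The `i`-th vertex of a simplex. -/
def vtx {Y : SSet.{0}} {m : SimplexCategoryᵒᵖ} (y : Y.obj m) (i : Fin (m.unop.len + 1)) :
    Y.obj V0 :=
  Y.map (SimplexCategory.const ⦋0⦌ m.unop i).op y

lemma map_zero_eq_vtx {Y : SSet.{0}} {m : SimplexCategoryᵒᵖ} (y : Y.obj m)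
    (g : (⦋0⦌ : SimplexCategory) ⟶ m.unop) :
    Y.map g.op y = vtx y (g.toOrderHom 0) := by
  rw [vtx]
  conv_lhs => rw [hom_from_zero_eq_const g]

lemma vtx_map {Y : SSet.{0}} {m m' : SimplexCategoryᵒᵖ} (f : m ⟶ m') (y : Y.obj m)
    (i : Fin (m'.unop.len + 1)) :
    vtx (Y.map f y) i = vtx y (f.unop.toOrderHom i) := by
  show Y.map (SimplexCategory.const ⦋0⦌ m'.unop i).op (Y.map f y) = _
  rw [← FunctorToTypes.map_comp_apply]
  show Y.map (SimplexCategory.const ⦋0⦌ m'.unop i ≫ f.unop).op y = _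
  rw [SimplexCategory.const_comp]
  rfl

lemma vtx_mem_sub {Y : SSet.{0}} (A : Sub Y) {m : SimplexCategoryᵒᵖ} {y : Y.obj m}
    (h : y ∈ A.carrier m) (i : Fin (m.unop.len + 1)) : vtx y i ∈ A.carrier V0 :=
  A.map_mem _ h

end AuxSimplexCat

section AuxMembership

lemma mem_zeroSlice_iff {Y : SSet.{0}} {m : SimplexCategoryᵒᵖ} (p : (sprod J Y).obj m) :
    p ∈ (zeroSlice Y).carrier m ↔ ∀ i, p.1 i = false := by
  constructor
  · intro h i
    exact h (SimplexCategory.const ⦋0⦌ m.unop i)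
  · intro h g
    exact h (g.toOrderHom 0)

lemma mem_wideSub_iff {Y : SSet.{0}} {ν : Set (Y.obj V0)} {m : SimplexCategoryᵒᵖ}
    (p : (sprod J Y).obj m) :
    p ∈ (wideSub Y ν).carrier m ↔ ∀ i, p.1 i = true → vtx p.2 i ∈ ν := by
  constructor
  · intro h i hi
    exact h (SimplexCategory.const ⦋0⦌ m.unop i) hi
  · intro h g hg
    rw [show ((sprod J Y).map g.op p).2 = Y.map g.op p.2 from rfl, map_zero_eq_vtx]
    exact h (g.toOrderHom 0) hg

/-- The constant-`false` simplex of `J`. -/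
def cfJ (m : SimplexCategoryᵒᵖ) : J.obj m := fun _ => false

lemma cf_mem_zeroSlice {Y : SSet.{0}} {m : SimplexCategoryᵒᵖ} (y : Y.obj m) :
    (cfJ m, y) ∈ (zeroSlice Y).carrier m :=
  (mem_zeroSlice_iff _).mpr (fun _ => rfl)

lemma eq_cf_of_zeroSlice {Y : SSet.{0}} {m : SimplexCategoryᵒᵖ} {p : (sprod J Y).obj m}
    (h : p ∈ (zeroSlice Y).carrier m) : p.1 = cfJ m :=
  funext fun i => (mem_zeroSlice_iff p).mp h i

/-- The subcomplex `({0} × Y) ∪ (J × A)` of `J × Y`. -/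
def USub (Y : SSet.{0}) (A : Sub Y) : Sub (sprod J Y) := (zeroSlice Y).union A.prodJ

lemma USub_mono {Y : SSet.{0}} {A B : Sub Y} (h : A.Le B) : (USub Y A).Le (USub Y B) :=
  fun m σ hσ => hσ.imp id (fun hp => h m hp)

lemma widenedSub_le_USub (Y : SSet.{0}) (A : Sub Y) (ν : Set (Y.obj V0)) :
    (widenedSub Y A ν).Le (USub Y A) :=
  fun m σ hσ => hσ.imp id (fun hp => hp.2)

end AuxMembership

section AuxLifting

lemma ext_of_hlp {X A B : SSet.{0}} (f : A ⟶ B) (h : HasLiftingProperty f (toPt X)) :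
    Ext X f := by
  intro u
  have sq : CommSq u f (toPt X) (toPt B) := ⟨toPt_eq _ _⟩
  exact ⟨sq.lift, sq.fac_left⟩

lemma hlp_of_ext {X A B : SSet.{0}} (f : A ⟶ B) (h : Ext X f) :
    HasLiftingProperty f (toPt X) := by
  constructor
  intro u g sq
  obtain ⟨v, hv⟩ := h u
  exact ⟨⟨⟨v, hv, toPt_eq _ _⟩⟩⟩

lemma hlp_congr {A B A' B' : SSet.{0}} {f : A ⟶ B} {g : A' ⟶ B'}
    (h : Arrow.mk f = Arrow.mk g) {P Q : SSet.{0}} (p : P ⟶ Q)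
    (hg : HasLiftingProperty g p) : HasLiftingProperty f p := by
  have h1 : A = A' := congrArg Comma.left h
  subst h1
  have h2 : B = B' := congrArg Comma.right h
  subst h2
  obtain rfl : f = g := (Arrow.mk_inj _ _).mp h
  exact hg

end AuxLifting

section AuxRetract

attribute [local instance] Classical.propDecidable

variable {Y : SSet.{0}}

/-- The retraction of `J × Y` onto the widening `W_ν(Y)`. -/
noncomputable def retr (Y : SSet.{0}) (ν : Set (Y.obj V0)) : sprod J Y ⟶ sprod J Y where
  app m := TypeCat.ofHom fun p => (fun i => p.1 i && decide (vtx p.2 i ∈ ν), p.2)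
  naturality m m' f := by
    ext p
    refine Prod.ext ?_ rfl
    funext i
    show ((J.map f p.1) i && decide (vtx (Y.map f p.2) i ∈ ν))
        = ((fun j => p.1 j && decide (vtx p.2 j ∈ ν)) (f.unop.toOrderHom i))
    rw [vtx_map]
    rfl

lemma retr_mem_wideSub (ν : Set (Y.obj V0)) {m : SimplexCategoryᵒᵖ} (p : (sprod J Y).obj m) :
    (retr Y ν).app m p ∈ (wideSub Y ν).carrier m := by
  rw [mem_wideSub_iff]
  intro i hi
  have h1 : (p.1 i && decide (vtx p.2 i ∈ ν)) = true := hi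
  rw [Bool.and_eq_true] at h1
  exact of_decide_eq_true h1.2

lemma retr_eq_of_wideSub {ν : Set (Y.obj V0)} {m : SimplexCategoryᵒᵖ}
    {p : (sprod J Y).obj m} (h : p ∈ (wideSub Y ν).carrier m) :
    (retr Y ν).app m p = p := by
  refine Prod.ext ?_ rfl
  funext i
  show (p.1 i && decide (vtx p.2 i ∈ ν)) = p.1 i
  cases hp : p.1 i with
  | false => rfl
  | true =>
    rw [Bool.true_and]
    exact decide_eq_true ((mem_wideSub_iff p).mp h i hp)

lemma retr_mem_widened {A : Sub Y} {ν : Set (Y.obj V0)} {m : SimplexCategoryᵒᵖ}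
    {p : (sprod J Y).obj m} (h : p ∈ (USub Y A).carrier m) :
    (retr Y ν).app m p ∈ (widenedSub Y A ν).carrier m := by
  rcases h with hz | hp
  · left
    rw [mem_zeroSlice_iff]
    intro i
    show (p.1 i && decide (vtx p.2 i ∈ ν)) = false
    rw [(mem_zeroSlice_iff p).mp hz i]
    rfl
  · right
    constructor
    · rw [mem_wideSub_iff]
      intro i hi
      have h1 : (p.1 i && decide (vtx p.2 i ∈ ν)) = true := hi
      rw [Bool.and_eq_true] at h1
      exact ⟨of_decide_eq_true h1.2, vtx_mem_sub A hp i⟩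
    · exact hp

lemma ext_widened {X : SSet.{0}} (A : Sub Y) (ν : Set (Y.obj V0))
    (hU : Ext X (USub Y A).ι) : Ext X (widenedIncl Y A ν) := by
  intro u
  set ru : (USub Y A).toSSet ⟶ X :=
    { app := fun m => TypeCat.ofHom fun σ => u.app m ⟨(retr Y ν).app m σ.1, retr_mem_widened σ.2⟩
      naturality := by
        intro m m' f
        ext σ
        have h1 := NatTrans.naturality_apply (retr Y ν) f σ.1
        have h2 := NatTrans.naturality_apply u f
          ⟨(retr Y ν).app m σ.1, retr_mem_widened σ.2⟩
        refine Eq.trans ?_ h2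
        exact congrArg (u.app m') (Subtype.ext h1) } with hru
  obtain ⟨v, hv⟩ := hU ru
  refine ⟨(wideSub Y ν).ι ≫ v, ?_⟩
  ext m σ
  show v.app m σ.1 = u.app m σ
  have hσU : σ.1 ∈ (USub Y A).carrier m := widenedSub_le_USub Y A ν m σ.2
  have h3 := ConcreteCategory.congr_hom (NatTrans.congr_app hv m) ⟨σ.1, hσU⟩
  have h4 : v.app m σ.1 = ru.app m ⟨σ.1, hσU⟩ := h3
  rw [h4, hru]
  have hr : (retr Y ν).app m σ.1 = σ.1 := retr_eq_of_wideSub (widenedSub_le Y A ν m σ.2)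
  exact congrArg (u.app m) (Subtype.ext hr)

end AuxRetract

section AuxEZ

variable {Y : SSet.{0}} {B : Sub Y} {d : ℕ} {z₀ : Y.obj (op (SimplexCategory.mk d))}

/-- If all simplices of dimension `< d` lie in `B`, then all non-surjective reindexings
of a `d`-simplex lie in `B`. -/
lemma P1 (hmin : ∀ (m : SimplexCategoryᵒᵖ) (z : Y.obj m), m.unop.len < d → z ∈ B.carrier m)
    {k : SimplexCategoryᵒᵖ} (f : k.unop ⟶ ⦋d⦌) (hf : ¬Function.Surjective f.toOrderHom) :
    Y.map f.op z₀ ∈ B.carrier k := by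
  cases d with
  | zero =>
    exact absurd (fun b => ⟨0, Subsingleton.elim (α := Fin 1) _ _⟩) hf
  | succ n =>
    obtain ⟨i, θ', hθ⟩ := SimplexCategory.eq_comp_δ_of_not_surjective f hf
    rw [hθ]
    rw [show (θ' ≫ SimplexCategory.δ i).op = (SimplexCategory.δ i).op ≫ θ'.op from rfl]
    rw [FunctorToTypes.map_comp_apply]
    exact B.map_mem θ'.op (hmin (op (SimplexCategory.mk n)) _ (Nat.lt_succ_self n))

/-- A surjective reindexing of a `d`-simplex not in `B` is not in `B`. -/
lemma P2 (hz : z₀ ∉ B.carrier (op (SimplexCategory.mk d)))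
    {k : SimplexCategoryᵒᵖ} (f : k.unop ⟶ ⦋d⦌) (hf : Function.Surjective f.toOrderHom) :
    Y.map f.op z₀ ∉ B.carrier k := by
  intro hmem
  obtain ⟨g, hg, -⟩ := exists_section _ _ f.toOrderHom hf 0
  have hcomp : (SimplexCategory.Hom.mk g : (⦋d⦌ : SimplexCategory) ⟶ k.unop) ≫ f = 𝟙 (SimplexCategory.mk d) := by
    apply SimplexCategory.Hom.ext
    apply OrderHom.ext
    funext i
    exact hg i
  have : z₀ = Y.map (Quiver.Hom.op (SimplexCategory.Hom.mk g : (⦋d⦌ : SimplexCategory) ⟶ k.unop)) (Y.map f.op z₀) := by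
    rw [← FunctorToTypes.map_comp_apply,
      show f.op ≫ (Quiver.Hom.op (SimplexCategory.Hom.mk g : (⦋d⦌ : SimplexCategory) ⟶ k.unop)) = ((SimplexCategory.Hom.mk g : (⦋d⦌ : SimplexCategory) ⟶ k.unop) ≫ f).op from rfl,
      hcomp]
    exact (FunctorToTypes.map_id_apply Y z₀).symm
  rw [this] at hz
  exact hz (B.map_mem _ hmem)

/-- An endomorphism fixing a simplex of minimal dimension outside `B` is the identity. -/
lemma P3 (hz : z₀ ∉ B.carrier (op (SimplexCategory.mk d)))
    (hmin : ∀ (m : SimplexCategoryᵒᵖ) (z : Y.obj m), m.unop.len < d → z ∈ B.carrier m)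
    (e : SimplexCategory.mk d ⟶ ⦋d⦌) (he : Y.map e.op z₀ = z₀) :
    e = 𝟙 (SimplexCategory.mk d) := by
  have hsurj : Function.Surjective e.toOrderHom := by
    by_contra hns
    exact hz (he ▸ P1 hmin e hns)
  apply SimplexCategory.Hom.ext
  apply OrderHom.ext
  funext i
  exact monotone_surj_id d e.toOrderHom hsurj i

/-- Eilenberg–Zilber uniqueness: two surjective reindexings giving the same simplex agree. -/
lemma P4 (hz : z₀ ∉ B.carrier (op (SimplexCategory.mk d)))
    (hmin : ∀ (m : SimplexCategoryᵒᵖ) (z : Y.obj m), m.unop.len < d → z ∈ B.carrier m)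
    {k : SimplexCategoryᵒᵖ} (f f' : k.unop ⟶ ⦋d⦌)
    (hf : Function.Surjective f.toOrderHom) (hf' : Function.Surjective f'.toOrderHom)
    (heq : Y.map f.op z₀ = Y.map f'.op z₀) : f = f' := by
  apply SimplexCategory.Hom.ext
  apply OrderHom.ext
  funext j
  obtain ⟨g, hg, hgj⟩ := exists_section _ _ f.toOrderHom hf j
  have hcomp : (SimplexCategory.Hom.mk g : (⦋d⦌ : SimplexCategory) ⟶ k.unop) ≫ f = 𝟙 (SimplexCategory.mk d) := by
    apply SimplexCategory.Hom.ext; apply OrderHom.ext; funext i; exact hg i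
  have hfix : Y.map ((SimplexCategory.Hom.mk g : (⦋d⦌ : SimplexCategory) ⟶ k.unop) ≫ f').op z₀ = z₀ := by
    rw [show ((SimplexCategory.Hom.mk g : (⦋d⦌ : SimplexCategory) ⟶ k.unop) ≫ f').op = f'.op ≫ (Quiver.Hom.op (SimplexCategory.Hom.mk g : (⦋d⦌ : SimplexCategory) ⟶ k.unop)) from rfl,
      FunctorToTypes.map_comp_apply, ← heq, ← FunctorToTypes.map_comp_apply,
      show f.op ≫ (Quiver.Hom.op (SimplexCategory.Hom.mk g : (⦋d⦌ : SimplexCategory) ⟶ k.unop)) = ((SimplexCategory.Hom.mk g : (⦋d⦌ : SimplexCategory) ⟶ k.unop) ≫ f).op from rfl,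
      hcomp]
    exact FunctorToTypes.map_id_apply Y z₀
  have hid := P3 hz hmin _ hfix
  have : f'.toOrderHom (g (f.toOrderHom j)) = f.toOrderHom j := by
    have := congrArg (fun (e : SimplexCategory.mk d ⟶ ⦋d⦌) => e.toOrderHom (f.toOrderHom j)) hid
    exact this
  rw [hgj] at this
  exact this.symm

end AuxEZ

section AuxZorn

/-- The subcomplex generated by a `d`-simplex `z₀`. -/
def genSub (Y : SSet.{0}) (d : ℕ) (z₀ : Y.obj (op (SimplexCategory.mk d))) : Sub Y where
  carrier k := {z | ∃ f : k.unop ⟶ ⦋d⦌, z = Y.map f.op z₀}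
  map_mem := by
    rintro k k' g z ⟨f, rfl⟩
    exact ⟨g.unop ≫ f, (FunctorToTypes.map_comp_apply Y f.op g z₀).symm⟩

/-- A partial extension of `u` over some `({0} × Y) ∪ (J × B)` with `A ≤ B`. -/
structure PExt (X Y : SSet.{0}) (A : Sub Y) (u : (USub Y A).toSSet ⟶ X) where
  B : Sub Y
  le : A.Le B
  v : (USub Y B).toSSet ⟶ X
  compat : ∀ (m : SimplexCategoryᵒᵖ) (σ : (sprod J Y).obj m)
    (h : σ ∈ (USub Y A).carrier m) (h' : σ ∈ (USub Y B).carrier m),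
    v.app m ⟨σ, h'⟩ = u.app m ⟨σ, h⟩

variable {X Y : SSet.{0}} {A : Sub Y} {u : (USub Y A).toSSet ⟶ X}

instance : Preorder (PExt X Y A u) where
  le p q := p.B.Le q.B ∧ ∀ (m : SimplexCategoryᵒᵖ) (σ : (sprod J Y).obj m)
    (h : σ ∈ (USub Y p.B).carrier m) (h' : σ ∈ (USub Y q.B).carrier m),
    q.v.app m ⟨σ, h'⟩ = p.v.app m ⟨σ, h⟩
  le_refl p := ⟨fun _ => subset_rfl, fun _ _ _ _ => rfl⟩
  le_trans p q r h1 h2 :=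
    ⟨fun m => Set.Subset.trans (h1.1 m) (h2.1 m),
     fun m σ hp hr =>
      (h2.2 m σ (USub_mono h1.1 m hp) hr).trans (h1.2 m σ hp (USub_mono h1.1 m hp))⟩

lemma pext_le_def {p q : PExt X Y A u} :
    p ≤ q ↔ p.B.Le q.B ∧ ∀ (m : SimplexCategoryᵒᵖ) (σ : (sprod J Y).obj m)
      (h : σ ∈ (USub Y p.B).carrier m) (h' : σ ∈ (USub Y q.B).carrier m),
      q.v.app m ⟨σ, h'⟩ = p.v.app m ⟨σ, h⟩ := Iff.rfl

lemma pext_bddAbove (c : Set (PExt X Y A u)) (hc : IsChain (· ≤ ·) c) (hne : c.Nonempty) :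
    BddAbove c := by
  classical
  obtain ⟨p₀, hp₀⟩ := hne
  set Bc : Sub Y :=
    { carrier := fun m => {z | ∃ p : PExt X Y A u, p ∈ c ∧ z ∈ p.B.carrier m}
      map_mem := by
        rintro m m' f z ⟨p, hp, hz⟩
        exact ⟨p, hp, p.B.map_mem f hz⟩ } with hBc
  have hcov : ∀ (m : SimplexCategoryᵒᵖ) (σ : (sprod J Y).obj m),
      σ ∈ (USub Y Bc).carrier m → ∃ p, p ∈ c ∧ σ ∈ (USub Y p.B).carrier m := by
    intro m σ h
    rcases h with hz | ⟨p, hp, hz⟩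
    · exact ⟨p₀, hp₀, Or.inl hz⟩
    · exact ⟨p, hp, Or.inr hz⟩
  set F : ∀ (m : SimplexCategoryᵒᵖ) (σ : (sprod J Y).obj m),
      σ ∈ (USub Y Bc).carrier m → X.obj m :=
    fun m σ h => (Classical.choose (hcov m σ h)).v.app m
      ⟨σ, (Classical.choose_spec (hcov m σ h)).2⟩ with hF
  have hagree : ∀ (p : PExt X Y A u), p ∈ c → ∀ (m : SimplexCategoryᵒᵖ)
      (σ : (sprod J Y).obj m) (hp : σ ∈ (USub Y p.B).carrier m)
      (h : σ ∈ (USub Y Bc).carrier m), F m σ h = p.v.app m ⟨σ, hp⟩ := by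
    intro p hpc m σ hp h
    obtain ⟨hqc, hq⟩ := Classical.choose_spec (hcov m σ h)
    rcases eq_or_ne p (Classical.choose (hcov m σ h)) with he | hne'
    · show (Classical.choose (hcov m σ h)).v.app m ⟨σ, hq⟩ = p.v.app m ⟨σ, hp⟩
      subst he
      rfl
    · rcases hc.total hpc hqc with hpq | hqp
      · exact hpq.2 m σ hp hq
      · exact (hqp.2 m σ hq hp).symm
  refine ⟨⟨Bc, fun m z hz => ⟨p₀, hp₀, p₀.le m hz⟩,
    { app := fun m => TypeCat.ofHom fun σ => F m σ.1 σ.2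
      naturality := by
        intro m m' g
        ext σ
        obtain ⟨p, hpc, hp⟩ := hcov m σ.1 σ.2
        have hp' : (sprod J Y).map g σ.1 ∈ (USub Y p.B).carrier m' :=
          (USub Y p.B).map_mem g hp
        have h2 := hagree p hpc m' ((sprod J Y).map g σ.1) hp' ((USub Y Bc).map_mem g σ.2)
        have h1 := hagree p hpc m σ.1 hp σ.2
        show F m' ((sprod J Y).map g σ.1) ((USub Y Bc).map_mem g σ.2) = X.map g (F m σ.1 σ.2)
        rw [h2, h1]
        exact NatTrans.naturality_apply p.v g ⟨σ.1, hp⟩ },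
    ?_⟩, ?_⟩
  · intro m σ h h'
    exact (hagree p₀ hp₀ m σ (USub_mono p₀.le m h) h').trans (p₀.compat m σ h _)
  · intro p hpc
    exact ⟨fun m z hz => ⟨p, hpc, hz⟩, fun m σ hp h' => hagree p hpc m σ hp h'⟩

end AuxZorn

section AuxStep

variable {X Y : SSet.{0}} {B : Sub Y} {d : ℕ}

/-- The `{0} × Δ[d]` part of the attaching map. -/
def attachU1 (v : (USub Y B).toSSet ⟶ X) (z₀ : Y.obj (op (SimplexCategory.mk d))) :
    sprod Δ[0] Δ[d] ⟶ X where
  app k := TypeCat.ofHom fun w => v.app k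
    ⟨(cfJ k, Y.map (SSet.stdSimplex.objEquiv w.2).op z₀), Or.inl (cf_mem_zeroSlice _)⟩
  naturality k k' g := by
    ext w
    have h2 := NatTrans.naturality_apply v g
      ⟨(cfJ k, Y.map (SSet.stdSimplex.objEquiv w.2).op z₀), Or.inl (cf_mem_zeroSlice _)⟩
    refine Eq.trans ?_ h2
    apply congrArg (v.app k')
    apply Subtype.ext
    refine Prod.ext rfl ?_
    exact FunctorToTypes.map_comp_apply Y (SSet.stdSimplex.objEquiv w.2).op g z₀

/-- The `J × boundary d` part of the attaching map. -/
def attachU2 (v : (USub Y B).toSSet ⟶ X) (z₀ : Y.obj (op (SimplexCategory.mk d)))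
    (h1 : ∀ {k : SimplexCategoryᵒᵖ} (f : k.unop ⟶ ⦋d⦌),
      ¬Function.Surjective f.toOrderHom → Y.map f.op z₀ ∈ B.carrier k) :
    sprod J (boundary d) ⟶ X where
  app k := TypeCat.ofHom fun w => v.app k
    ⟨(w.1, Y.map (SSet.stdSimplex.objEquiv w.2.1).op z₀), Or.inr (h1 _ w.2.2)⟩
  naturality k k' g := by
    ext w
    have h2 := NatTrans.naturality_apply v g
      ⟨(w.1, Y.map (SSet.stdSimplex.objEquiv w.2.1).op z₀), Or.inr (h1 _ w.2.2)⟩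
    refine Eq.trans ?_ h2
    apply congrArg (v.app k')
    apply Subtype.ext
    refine Prod.ext rfl ?_
    exact FunctorToTypes.map_comp_apply Y (SSet.stdSimplex.objEquiv w.2.1).op g z₀

variable {A : Sub Y} {u : (USub Y A).toSSet ⟶ X}

lemma pext_step (hBdry : ∀ n : ℕ, Ext X (pp (ptJ false) (boundaryInclusion n)))
    (p : PExt X Y A u) (d : ℕ) (z₀ : Y.obj (op (SimplexCategory.mk d)))
    (hz : z₀ ∉ p.B.carrier (op (SimplexCategory.mk d)))
    (hmin : ∀ (m : SimplexCategoryᵒᵖ) (z : Y.obj m), m.unop.len < d → z ∈ p.B.carrier m) :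
    ∃ q : PExt X Y A u, p ≤ q ∧ z₀ ∈ q.B.carrier (op (SimplexCategory.mk d)) := by
  classical
  have h1 : ∀ {k : SimplexCategoryᵒᵖ} (f : k.unop ⟶ ⦋d⦌),
      ¬Function.Surjective f.toOrderHom → Y.map f.op z₀ ∈ p.B.carrier k :=
    fun f hf => P1 hmin f hf
  have hcomp : sprodMap (𝟙 Δ[0]) (boundaryInclusion d) ≫ attachU1 p.v z₀
      = sprodMap (ptJ false) (𝟙 (boundary d)) ≫ attachU2 p.v z₀ h1 := by
    ext k w
    rfl
  obtain ⟨vl, hvl⟩ := hBdry d (pushout.desc (attachU1 p.v z₀) (attachU2 p.v z₀ h1) hcomp)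
  have h₁ : sprodMap (ptJ false) (𝟙 Δ[d]) ≫ vl = attachU1 p.v z₀ := by
    have e1 : pushout.inl (sprodMap (𝟙 Δ[0]) (boundaryInclusion d))
        (sprodMap (ptJ false) (𝟙 (boundary d))) ≫ pp (ptJ false) (boundaryInclusion d)
        = sprodMap (ptJ false) (𝟙 Δ[d]) := pushout.inl_desc _ _ _
    rw [← e1, Category.assoc, hvl, pushout.inl_desc]
  have h₂ : sprodMap (𝟙 J) (boundaryInclusion d) ≫ vl = attachU2 p.v z₀ h1 := by
    have e2 : pushout.inr (sprodMap (𝟙 Δ[0]) (boundaryInclusion d))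
        (sprodMap (ptJ false) (𝟙 (boundary d))) ≫ pp (ptJ false) (boundaryInclusion d)
        = sprodMap (𝟙 J) (boundaryInclusion d) := pushout.inr_desc _ _ _
    rw [← e2, Category.assoc, hvl, pushout.inr_desc]
  have hK : ∀ (k : SimplexCategoryᵒᵖ) (a : J.obj k) (f : k.unop ⟶ ⦋d⦌)
      (hm : (a, Y.map f.op z₀) ∈ (USub Y p.B).carrier k),
      vl.app k (a, (SSet.stdSimplex.objEquiv).symm f)
        = p.v.app k ⟨(a, Y.map f.op z₀), hm⟩ := by
    intro k a f hm
    rcases hm with hz0 | hb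
    · have ha : a = cfJ k := eq_cf_of_zeroSlice hz0
      subst ha
      exact ConcreteCategory.congr_hom (NatTrans.congr_app h₁ k)
        ((SSet.stdSimplex.const 0 0 k, (SSet.stdSimplex.objEquiv).symm f) : (sprod Δ[0] Δ[d]).obj k)
    · have hns : ¬Function.Surjective f.toOrderHom := fun hs => P2 hz f hs hb
      exact ConcreteCategory.congr_hom (NatTrans.congr_app h₂ k)
        ((a, ⟨(SSet.stdSimplex.objEquiv).symm f, hns⟩) : (sprod J (boundary d)).obj k)
  -- the enlarged subcomplex and extension
  set B' : Sub Y := p.B.union (genSub Y d z₀) with hB'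
  have hgen : ∀ {k : SimplexCategoryᵒᵖ} (σ : (sprod J Y).obj k),
      σ ∈ (USub Y B').carrier k → σ ∉ (USub Y p.B).carrier k →
      ∃ f : k.unop ⟶ ⦋d⦌, σ.2 = Y.map f.op z₀ := by
    intro k σ hσ hn
    rcases hσ with hz0 | hb
    · exact absurd (Or.inl hz0) hn
    · rcases hb with hb | hg
      · exact absurd (Or.inr hb) hn
      · exact hg
  have hsurj : ∀ {k : SimplexCategoryᵒᵖ} (σ : (sprod J Y).obj k),
      σ ∉ (USub Y p.B).carrier k → ∀ f : k.unop ⟶ ⦋d⦌, σ.2 = Y.map f.op z₀ →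
      Function.Surjective f.toOrderHom := by
    intro k σ hn f hf
    by_contra hns
    refine hn (Or.inr ?_)
    show σ.2 ∈ p.B.carrier k
    rw [hf]
    exact h1 f hns
  set G : ∀ (k : SimplexCategoryᵒᵖ) (σ : (sprod J Y).obj k),
      σ ∈ (USub Y B').carrier k → X.obj k :=
    fun k σ hσ =>
      if h : σ ∈ (USub Y p.B).carrier k then p.v.app k ⟨σ, h⟩
      else vl.app k (σ.1, (SSet.stdSimplex.objEquiv).symm
        (Classical.choose (hgen σ hσ h))) with hGdef
  have hGpos : ∀ (k : SimplexCategoryᵒᵖ) (σ : (sprod J Y).obj k)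
      (hσ : σ ∈ (USub Y B').carrier k) (h : σ ∈ (USub Y p.B).carrier k),
      G k σ hσ = p.v.app k ⟨σ, h⟩ := by
    intro k σ hσ h
    exact dif_pos h
  have hGneg : ∀ (k : SimplexCategoryᵒᵖ) (σ : (sprod J Y).obj k)
      (hσ : σ ∈ (USub Y B').carrier k) (h : σ ∉ (USub Y p.B).carrier k)
      (f : k.unop ⟶ ⦋d⦌) (hf : σ.2 = Y.map f.op z₀)
      (hfs : Function.Surjective f.toOrderHom),
      G k σ hσ = vl.app k (σ.1, (SSet.stdSimplex.objEquiv).symm f) := by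
    intro k σ hσ h f hf hfs
    have hch : Classical.choose (hgen σ hσ h) = f :=
      P4 hz hmin _ _ (hsurj σ h _ (Classical.choose_spec (hgen σ hσ h))) hfs
        (((Classical.choose_spec (hgen σ hσ h)).symm).trans hf)
    exact (dif_neg h).trans (by rw [hch])
  have hGnat : ∀ (k k' : SimplexCategoryᵒᵖ) (g : k ⟶ k') (σ : (sprod J Y).obj k)
      (hσ : σ ∈ (USub Y B').carrier k),
      G k' ((sprod J Y).map g σ) ((USub Y B').map_mem g hσ) = X.map g (G k σ hσ) := by
    intro k k' g σ hσ
    by_cases h : σ ∈ (USub Y p.B).carrier k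
    · have h' : (sprod J Y).map g σ ∈ (USub Y p.B).carrier k' := (USub Y p.B).map_mem g h
      rw [hGpos k σ hσ h, hGpos k' ((sprod J Y).map g σ) ((USub Y B').map_mem g hσ) h']
      exact NatTrans.naturality_apply p.v g ⟨σ, h⟩
    · have hf₀ := Classical.choose_spec (hgen σ hσ h)
      set f₀ := Classical.choose (hgen σ hσ h) with hf₀def
      have hfs₀ : Function.Surjective f₀.toOrderHom := hsurj σ h _ hf₀
      have hval : G k σ hσ = vl.app k (σ.1, (SSet.stdSimplex.objEquiv).symm f₀) :=
        hGneg k σ hσ h f₀ hf₀ hfs₀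
      have himg : ((sprod J Y).map g σ).2 = Y.map (g.unop ≫ f₀).op z₀ := by
        show Y.map g σ.2 = _
        rw [hf₀]
        exact (FunctorToTypes.map_comp_apply Y f₀.op g z₀).symm
      have e : (sprod J Y).map g σ = (J.map g σ.1, Y.map (g.unop ≫ f₀).op z₀) :=
        Prod.ext rfl himg
      have hnat : vl.app k' ((sprod J Δ[d]).map g (σ.1, (SSet.stdSimplex.objEquiv).symm f₀))
          = X.map g (vl.app k (σ.1, (SSet.stdSimplex.objEquiv).symm f₀)) :=
        NatTrans.naturality_apply vl g ((σ.1, (SSet.stdSimplex.objEquiv).symm f₀) : (sprod J Δ[d]).obj k)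
      by_cases h' : (sprod J Y).map g σ ∈ (USub Y p.B).carrier k'
      · rw [hGpos k' ((sprod J Y).map g σ) ((USub Y B').map_mem g hσ) h', hval, ← hnat]
        have hmem : (J.map g σ.1, Y.map (g.unop ≫ f₀).op z₀) ∈ (USub Y p.B).carrier k' :=
          e ▸ h'
        have hKk := hK k' (J.map g σ.1) (g.unop ≫ f₀) hmem
        refine Eq.trans ?_ hKk.symm
        exact congrArg (p.v.app k') (Subtype.ext e)
      · have hval' := hGneg k' ((sprod J Y).map g σ) ((USub Y B').map_mem g hσ) h'
          (g.unop ≫ f₀) himg (hsurj ((sprod J Y).map g σ) h' _ himg)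
        rw [hval, hval', ← hnat]
        rfl
  refine ⟨⟨B', fun m z hzA => Or.inl (p.le m hzA),
      { app := fun k => TypeCat.ofHom fun σ => G k σ.1 σ.2
        naturality := by
          intro k k' g
          ext σ
          exact hGnat k k' g σ.1 σ.2 },
      ?_⟩, ⟨fun m z hzB => Or.inl hzB, ?_⟩, ?_⟩
  · intro m σ h h'
    have hBm : σ ∈ (USub Y p.B).carrier m := USub_mono p.le m h
    exact (hGpos m σ h' hBm).trans (p.compat m σ h hBm)
  · intro m σ h h'
    exact hGpos m σ h' h
  · exact Or.inr ⟨𝟙 (SimplexCategory.mk d), by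
      rw [op_id]
      exact (FunctorToTypes.map_id_apply Y z₀).symm⟩

lemma ext_USub (hBdry : ∀ n : ℕ, Ext X (pp (ptJ false) (boundaryInclusion n)))
    (A : Sub Y) : Ext X (USub Y A).ι := by
  classical
  intro u
  haveI : Nonempty (PExt X Y A u) := ⟨⟨A, fun _ => subset_rfl, u, fun _ _ _ _ => rfl⟩⟩
  obtain ⟨p, hmax⟩ := zorn_le_nonempty (α := PExt X Y A u) pext_bddAbove
  by_cases hfull : ∀ (m : SimplexCategoryᵒᵖ) (z : Y.obj m), z ∈ p.B.carrier m
  · refine ⟨⟨fun m => TypeCat.ofHom fun σ => p.v.app m ⟨σ, Or.inr (hfull m σ.2)⟩, ?_⟩, ?_⟩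
    · intro m m' g
      ext σ
      exact NatTrans.naturality_apply p.v g ⟨σ, Or.inr (hfull m σ.2)⟩
    · ext m σ
      exact p.compat m σ.1 σ.2 _
  · push_neg at hfull
    obtain ⟨m, z, hz⟩ := hfull
    exfalso
    have hex : ∃ j : ℕ, ∃ z' : Y.obj (op (SimplexCategory.mk j)),
        z' ∉ p.B.carrier (op (SimplexCategory.mk j)) := ⟨m.unop.len, z, hz⟩
    obtain ⟨z₀, hz₀⟩ := Nat.find_spec hex
    have hmin : ∀ (k : SimplexCategoryᵒᵖ) (z' : Y.obj k), k.unop.len < Nat.find hex →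
        z' ∈ p.B.carrier k := by
      intro k z' hk
      by_contra hzn
      exact absurd hk (not_lt.mpr (Nat.find_le ⟨z', hzn⟩))
    obtain ⟨q, hpq, hzq⟩ := pext_step hBdry p (Nat.find hex) z₀ hz₀ hmin
    exact hz₀ ((hmax hpq).1 _ hzq)

end AuxStep

section AuxBackward

variable {X : SSet.{0}}

lemma wide_key (n : ℕ) (hw : Ext X (widenedIncl Δ[n] (bSub n) Set.univ))
    (uL : sprod Δ[0] Δ[n] ⟶ X) (uR : sprod J (boundary n) ⟶ X)
    (hcond : sprodMap (𝟙 Δ[0]) (boundaryInclusion n) ≫ uL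
      = sprodMap (ptJ false) (𝟙 (boundary n)) ≫ uR) :
    ∃ v : sprod J Δ[n] ⟶ X, sprodMap (ptJ false) (𝟙 Δ[n]) ≫ v = uL ∧
      sprodMap (𝟙 J) (boundaryInclusion n) ≫ v = uR := by
  classical
  have hR : ∀ (m : SimplexCategoryᵒᵖ) (w : (boundary n).obj m) (q : Δ[0].obj m),
      uL.app m (q, w.1) = uR.app m (cfJ m, w) :=
    fun m w q => ConcreteCategory.congr_hom (NatTrans.congr_app hcond m) ((q, w) : (sprod Δ[0] (boundary n)).obj m)
  have hBd : ∀ {m : SimplexCategoryᵒᵖ} (σ : (sprod J Δ[n]).obj m),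
      σ ∈ (widenedSub Δ[n] (bSub n) Set.univ).carrier m →
      σ ∉ (zeroSlice Δ[n]).carrier m → σ.2 ∈ (bSub n).carrier m := by
    intro m σ hσ h0
    rcases hσ with h | h
    · exact absurd h h0
    · exact h.2
  have hmemBd : ∀ {m : SimplexCategoryᵒᵖ} (w : (boundary n).obj m) (a : J.obj m),
      (a, w.1) ∈ (widenedSub Δ[n] (bSub n) Set.univ).carrier m := by
    intro m w a
    right
    refine ⟨?_, w.2⟩
    refine (mem_wideSub_iff _).mpr ?_
    intro i _
    refine ⟨Set.mem_univ _, ?_⟩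
    intro hs
    exact w.2 (Function.Surjective.of_comp hs)
  have hmem0 : ∀ {m : SimplexCategoryᵒᵖ} (y : Δ[n].obj m),
      ((cfJ m, y) : (sprod J Δ[n]).obj m) ∈ (widenedSub Δ[n] (bSub n) Set.univ).carrier m :=
    fun y => Or.inl (cf_mem_zeroSlice y)
  set u' : (widenedSub Δ[n] (bSub n) Set.univ).toSSet ⟶ X :=
    { app := fun m => TypeCat.ofHom fun σ =>
        if h0 : σ.1 ∈ (zeroSlice Δ[n]).carrier m then
          uL.app m (SSet.stdSimplex.const 0 0 m, σ.1.2)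
        else uR.app m (σ.1.1, ⟨σ.1.2, hBd σ.1 σ.2 h0⟩)
      naturality := by
        intro m m' g
        ext σ
        have hσ' : (sprod J Δ[n]).map g σ.1 ∈ (widenedSub Δ[n] (bSub n) Set.univ).carrier m' :=
          (widenedSub Δ[n] (bSub n) Set.univ).map_mem g σ.2
        show (if h0 : (sprod J Δ[n]).map g σ.1 ∈ (zeroSlice Δ[n]).carrier m' then
            uL.app m' (SSet.stdSimplex.const 0 0 m', ((sprod J Δ[n]).map g σ.1).2)
          else uR.app m' (((sprod J Δ[n]).map g σ.1).1,
            ⟨((sprod J Δ[n]).map g σ.1).2, hBd ((sprod J Δ[n]).map g σ.1) hσ' h0⟩))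
          = X.map g (if h0 : σ.1 ∈ (zeroSlice Δ[n]).carrier m then
            uL.app m (SSet.stdSimplex.const 0 0 m, σ.1.2)
          else uR.app m (σ.1.1, ⟨σ.1.2, hBd σ.1 σ.2 h0⟩))
        by_cases h0 : σ.1 ∈ (zeroSlice Δ[n]).carrier m
        · have h0' : (sprod J Δ[n]).map g σ.1 ∈ (zeroSlice Δ[n]).carrier m' :=
            (zeroSlice Δ[n]).map_mem g h0
          rw [dif_pos h0', dif_pos h0]
          have hnat : uL.app m' ((sprod Δ[0] Δ[n]).map g (SSet.stdSimplex.const 0 0 m, σ.1.2))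
              = X.map g (uL.app m (SSet.stdSimplex.const 0 0 m, σ.1.2)) :=
            NatTrans.naturality_apply uL g ((SSet.stdSimplex.const 0 0 m, σ.1.2) : (sprod Δ[0] Δ[n]).obj m)
          refine Eq.trans ?_ hnat
          exact congrArg (uL.app m') (Prod.ext (pt_eq _ _) rfl)
        · have hnatR : uR.app m' ((sprod J (boundary n)).map g (σ.1.1, ⟨σ.1.2, hBd σ.1 σ.2 h0⟩))
              = X.map g (uR.app m (σ.1.1, ⟨σ.1.2, hBd σ.1 σ.2 h0⟩)) :=
            NatTrans.naturality_apply uR g ((σ.1.1, ⟨σ.1.2, hBd σ.1 σ.2 h0⟩) : (sprod J (boundary n)).obj m)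
          by_cases h0' : (sprod J Δ[n]).map g σ.1 ∈ (zeroSlice Δ[n]).carrier m'
          · rw [dif_pos h0', dif_neg h0]
            refine Eq.trans (hR m' ⟨((sprod J Δ[n]).map g σ.1).2,
              (bSub n).map_mem g (hBd σ.1 σ.2 h0)⟩ _) ?_
            refine Eq.trans ?_ hnatR
            apply congrArg (uR.app m')
            refine Prod.ext ?_ (Subtype.ext rfl)
            exact (eq_cf_of_zeroSlice h0').symm
          · rw [dif_neg h0', dif_neg h0]
            exact hnatR }
  obtain ⟨w', hw'⟩ := hw u'
  have memW : ∀ {m : SimplexCategoryᵒᵖ} (σ : (sprod J Δ[n]).obj m),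
      σ ∈ (wideSub Δ[n] Set.univ).carrier m := by
    intro m σ
    refine (mem_wideSub_iff _).mpr ?_
    intro i _
    exact Set.mem_univ _
  have hw'app : ∀ {m : SimplexCategoryᵒᵖ} (σ : (sprod J Δ[n]).obj m)
      (h : σ ∈ (widenedSub Δ[n] (bSub n) Set.univ).carrier m),
      w'.app m ⟨σ, memW σ⟩ = u'.app m ⟨σ, h⟩ :=
    fun σ h => ConcreteCategory.congr_hom (NatTrans.congr_app hw' _) ⟨σ, h⟩
  refine ⟨{ app := fun m => TypeCat.ofHom fun σ => w'.app m ⟨σ, memW σ⟩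
            naturality := by
              intro m m' g
              ext σ
              exact NatTrans.naturality_apply w' g ⟨σ, memW σ⟩ }, ?_, ?_⟩
  · ext m w
    show w'.app m ⟨((ptJ false).app m w.1, w.2), memW _⟩ = uL.app m w
    rw [hw'app ((ptJ false).app m w.1, w.2) (hmem0 w.2)]
    show (if h0 : ((cfJ m, w.2) : (sprod J Δ[n]).obj m) ∈ (zeroSlice Δ[n]).carrier m then
        uL.app m (SSet.stdSimplex.const 0 0 m, w.2)
      else uR.app m (cfJ m, ⟨w.2, hBd (cfJ m, w.2) (hmem0 w.2) h0⟩)) = uL.app m w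
    rw [dif_pos (cf_mem_zeroSlice w.2)]
    exact congrArg (uL.app m) (Prod.ext (pt_eq _ _) rfl)
  · ext m w
    show w'.app m ⟨(w.1, w.2.1), memW _⟩ = uR.app m w
    rw [hw'app (w.1, w.2.1) (hmemBd w.2 w.1)]
    show (if h0 : ((w.1, w.2.1) : (sprod J Δ[n]).obj m) ∈ (zeroSlice Δ[n]).carrier m then
        uL.app m (SSet.stdSimplex.const 0 0 m, w.2.1)
      else uR.app m (w.1, ⟨w.2.1, hBd (w.1, w.2.1) (hmemBd w.2 w.1) h0⟩)) = uR.app m w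
    by_cases h0 : ((w.1, w.2.1) : (sprod J Δ[n]).obj m) ∈ (zeroSlice Δ[n]).carrier m
    · rw [dif_pos h0]
      refine Eq.trans (hR m w.2 _) ?_
      apply congrArg (uR.app m)
      refine Prod.ext ?_ rfl
      exact (eq_cf_of_zeroSlice h0).symm
    · rw [dif_neg h0]
      exact congrArg (uR.app m) (Prod.ext rfl (Subtype.ext rfl))

lemma ext_pp_of_wide (n : ℕ) (hw : Ext X (widenedIncl Δ[n] (bSub n) Set.univ)) :
    Ext X (pp (ptJ false) (boundaryInclusion n)) := by
  intro uP
  obtain ⟨v, hv1, hv2⟩ := wide_key n hw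
    (pushout.inl _ _ ≫ uP) (pushout.inr _ _ ≫ uP)
    (by rw [← Category.assoc, ← Category.assoc, pushout.condition])
  refine ⟨v, ?_⟩
  apply pushout.hom_ext
  · have e1 : pushout.inl (sprodMap (𝟙 Δ[0]) (boundaryInclusion n))
        (sprodMap (ptJ false) (𝟙 (boundary n))) ≫ pp (ptJ false) (boundaryInclusion n)
        = sprodMap (ptJ false) (𝟙 Δ[n]) := pushout.inl_desc _ _ _
    rw [← Category.assoc, e1, hv1]
  · have e2 : pushout.inr (sprodMap (𝟙 Δ[0]) (boundaryInclusion n))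
        (sprodMap (ptJ false) (𝟙 (boundary n))) ≫ pp (ptJ false) (boundaryInclusion n)
        = sprodMap (𝟙 J) (boundaryInclusion n) := pushout.inr_desc _ _ _
    rw [← Category.assoc, e2, hv2]

end AuxBackward

/-- A simplicial set `X` has the right lifting property (with respect to
the unique map `X ⟶ Δ[0]`) against every map in `({0} ↪ J) □ Bdry` if and only if it has
the right lifting property against every widened inclusion. -/
theorem rlp_ppJ0Bdry_iff_rlp_Wide (X : SSet.{0}) :
    (∀ ⦃A B : SSet.{0}⦄ (f : A ⟶ B), ppJ0Bdry f → HasLiftingProperty f (toPt X)) ↔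
      (∀ ⦃A B : SSet.{0}⦄ (f : A ⟶ B), Wide f → HasLiftingProperty f (toPt X)) := by
  constructor
  · intro hpp A B f hf
    obtain ⟨Y, Asub, ν, harr⟩ := hf
    exact hlp_congr harr (toPt X) (hlp_of_ext _ (ext_widened Asub ν
      (ext_USub (fun n => ext_of_hlp _
        (hpp (pp (ptJ false) (boundaryInclusion n)) ⟨n, rfl⟩)) Asub)))
  · intro hwide A B f hf
    obtain ⟨n, harr⟩ := hf
    exact hlp_congr harr (toPt X) (hlp_of_ext _ (ext_pp_of_wide n (ext_of_hlp _
      (hwide (widenedIncl Δ[n] (bSub n) Set.univ) ⟨Δ[n], bSub n, Set.univ, rfl⟩))))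

end Paper
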